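/- Let T^{*,*,*} be a triple complex of R-modules with three anticommuting differentials d_x, d_y, d_z. If T is exact in the z-direction, i.e. each complex T^{x,y,*} is acyclic, then the below-and-left truncated totalisation bltTot(T), whose n-th term is the truncated product {Σ_{p,q≥k} m_{p,q} x^p y^q | m_{p,q} ∈ T^{p,q,n-p-q}} with differential d = d_x + d_y + d_z, is acyclic. -/
import Mathlib


/-- Transport along equalities of indices of a triply indexed family of modules. -/
def castT {R : Type} [Ring R] (T : ℤ → ℤ → ℤ → Type)
    [∀ x y z, AddCommGroup (T x y z)] [∀ x y z, Module R (T x y z)] :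
    ∀ {x y z x' y' z' : ℤ}, x = x' → y = y' → z = z' → (T x y z →ₗ[R] T x' y' z')
  | _, _, _, _, _, _, rfl, rfl, rfl => LinearMap.id

/-- The differential `d_x + d_y + d_z` of the totalisation of a triple complex, with `n`-th
term the full product `∀ p q, T p q (n - p - q)`.  Restricted to elements which vanish
whenever `p` or `q` is sufficiently small, this is the differential of the below-and-left
truncated totalisation `bltTot`. -/
def tot3d {R : Type} [Ring R] (T : ℤ → ℤ → ℤ → Type)
    [∀ x y z, AddCommGroup (T x y z)] [∀ x y z, Module R (T x y z)]
    (dx : ∀ x y z, T x y z →ₗ[R] T (x + 1) y z)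
    (dy : ∀ x y z, T x y z →ₗ[R] T x (y + 1) z)
    (dz : ∀ x y z, T x y z →ₗ[R] T x y (z + 1))
    (n : ℤ) : (∀ p q, T p q (n - p - q)) →ₗ[R] (∀ p q, T p q (n + 1 - p - q)) :=
  LinearMap.pi fun p => LinearMap.pi fun q =>
    (castT T (by omega : p - 1 + 1 = p) rfl (by omega : n - (p - 1) - q = n + 1 - p - q)).comp
        ((dx (p - 1) q (n - (p - 1) - q)).comp
          ((LinearMap.proj (φ := fun q' => T (p - 1) q' (n - (p - 1) - q')) q).comp
            (LinearMap.proj (φ := fun p' => ∀ q', T p' q' (n - p' - q')) (p - 1))))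
      + (castT T rfl (by omega : q - 1 + 1 = q)
            (by omega : n - p - (q - 1) = n + 1 - p - q)).comp
        ((dy p (q - 1) (n - p - (q - 1))).comp
          ((LinearMap.proj (φ := fun q' => T p q' (n - p - q')) (q - 1)).comp
            (LinearMap.proj (φ := fun p' => ∀ q', T p' q' (n - p' - q')) p)))
      + ((castT T rfl rfl (by omega : n - p - q + 1 = n + 1 - p - q) :
            T p q (n - p - q + 1) →ₗ[R] T p q (n + 1 - p - q))).comp
        ((dz p q (n - p - q)).comp
          ((LinearMap.proj (φ := fun q' => T p q' (n - p - q')) q).comp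
            (LinearMap.proj (φ := fun p' => ∀ q', T p' q' (n - p' - q')) p)))

namespace BltAux

variable {R : Type} [Ring R] (T : ℤ → ℤ → ℤ → Type)
    [∀ x y z, AddCommGroup (T x y z)] [∀ x y z, Module R (T x y z)]

theorem castT_castT {x y z x' y' z' x'' y'' z'' : ℤ}
    (h1 : x = x') (h2 : y = y') (h3 : z = z')
    (h1' : x' = x'') (h2' : y' = y'') (h3' : z' = z'') (m : T x y z) :
    castT (R := R) T h1' h2' h3' (castT (R := R) T h1 h2 h3 m)
      = castT (R := R) T (h1.trans h1') (h2.trans h2') (h3.trans h3') m := by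
  subst h1 h2 h3 h1' h2' h3'; rfl

theorem castT_self {x y z : ℤ} (h1 : x = x) (h2 : y = y) (h3 : z = z) (m : T x y z) :
    castT (R := R) T h1 h2 h3 m = m := rfl

theorem castT_add_castT {x y z x' y' z' : ℤ}
    (h1 h1' : x = x') (h2 h2' : y = y') (h3 h3' : z = z') (m m' : T x y z) :
    castT (R := R) T h1 h2 h3 m + castT (R := R) T h1' h2' h3' m'
      = castT (R := R) T h1 h2 h3 (m + m') := by
  subst h1 h2 h3; rfl

theorem castT_eq_zero {x y z x' y' z' : ℤ}
    (h1 : x = x') (h2 : y = y') (h3 : z = z') (m : T x y z) :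
    castT (R := R) T h1 h2 h3 m = 0 ↔ m = 0 := by
  subst h1 h2 h3; exact Iff.rfl

variable (dx : ∀ x y z, T x y z →ₗ[R] T (x + 1) y z)
variable (dy : ∀ x y z, T x y z →ₗ[R] T x (y + 1) z)
variable (dz : ∀ x y z, T x y z →ₗ[R] T x y (z + 1))

theorem dx_castT {x y z x' y' z' : ℤ} (h1 : x = x') (h2 : y = y') (h3 : z = z') (m : T x y z) :
    dx x' y' z' (castT (R := R) T h1 h2 h3 m)
      = castT (R := R) T (by rw [h1]) h2 h3 (dx x y z m) := by
  subst h1 h2 h3; rfl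

theorem dy_castT {x y z x' y' z' : ℤ} (h1 : x = x') (h2 : y = y') (h3 : z = z') (m : T x y z) :
    dy x' y' z' (castT (R := R) T h1 h2 h3 m)
      = castT (R := R) T h1 (by rw [h2]) h3 (dy x y z m) := by
  subst h1 h2 h3; rfl

theorem dz_castT {x y z x' y' z' : ℤ} (h1 : x = x') (h2 : y = y') (h3 : z = z') (m : T x y z) :
    dz x' y' z' (castT (R := R) T h1 h2 h3 m)
      = castT (R := R) T h1 h2 (by rw [h3]) (dz x y z m) := by
  subst h1 h2 h3; rfl

def DX (n p q : ℤ) : T (p - 1) q (n - (p - 1) - q) →ₗ[R] T p q (n + 1 - p - q) :=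
  (castT T (by omega) rfl (by omega)).comp (dx (p - 1) q (n - (p - 1) - q))

def DY (n p q : ℤ) : T p (q - 1) (n - p - (q - 1)) →ₗ[R] T p q (n + 1 - p - q) :=
  (castT T rfl (by omega) (by omega)).comp (dy p (q - 1) (n - p - (q - 1)))

def DZ (n p q : ℤ) : T p q (n - p - q) →ₗ[R] T p q (n + 1 - p - q) :=
  (castT T rfl rfl (by omega)).comp (dz p q (n - p - q))

theorem tot3d_apply (n : ℤ) (f : ∀ p q, T p q (n - p - q)) (p q : ℤ) :
    tot3d T dx dy dz n f p q
      = DX T dx n p q (f (p - 1) q) + DY T dy n p q (f p (q - 1)) + DZ T dz n p q (f p q) := rfl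

theorem DXX (hxx : ∀ x y z (m : T x y z), dx (x + 1) y z (dx x y z m) = 0) (n p q : ℤ)
    (m : T (p - 1 - 1) q (n - (p - 1 - 1) - q)) :
    DX T dx (n + 1) p q (DX T dx n (p - 1) q m) = 0 := by
  simp only [DX, LinearMap.comp_apply]
  rw [dx_castT, castT_castT, hxx, map_zero]

theorem DYY (hyy : ∀ x y z (m : T x y z), dy x (y + 1) z (dy x y z m) = 0) (n p q : ℤ)
    (m : T p (q - 1 - 1) (n - p - (q - 1 - 1))) :
    DY T dy (n + 1) p q (DY T dy n p (q - 1) m) = 0 := by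
  simp only [DY, LinearMap.comp_apply]
  rw [dy_castT, castT_castT, hyy, map_zero]

theorem DXY
    (hxy : ∀ x y z (m : T x y z), dx x (y + 1) z (dy x y z m) + dy (x + 1) y z (dx x y z m) = 0)
    (n p q : ℤ) (m : T (p - 1) (q - 1) (n - (p - 1) - (q - 1))) :
    DX T dx (n + 1) p q (DY T dy n (p - 1) q m)
      + DY T dy (n + 1) p q (DX T dx n p (q - 1) m) = 0 := by
  simp only [DX, DY, LinearMap.comp_apply]
  rw [dx_castT, dy_castT, castT_castT, castT_castT, castT_add_castT, hxy, map_zero]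

theorem DXZ
    (hxz : ∀ x y z (m : T x y z), dx x y (z + 1) (dz x y z m) + dz (x + 1) y z (dx x y z m) = 0)
    (n p q : ℤ) (m : T (p - 1) q (n - (p - 1) - q)) :
    DX T dx (n + 1) p q (DZ T dz n (p - 1) q m)
      + DZ T dz (n + 1) p q (DX T dx n p q m) = 0 := by
  simp only [DX, DZ, LinearMap.comp_apply]
  rw [dx_castT, dz_castT, castT_castT, castT_castT, castT_add_castT, hxz, map_zero]

theorem DYZ
    (hyz : ∀ x y z (m : T x y z), dy x y (z + 1) (dz x y z m) + dz x (y + 1) z (dy x y z m) = 0)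
    (n p q : ℤ) (m : T p (q - 1) (n - p - (q - 1))) :
    DY T dy (n + 1) p q (DZ T dz n p (q - 1) m)
      + DZ T dz (n + 1) p q (DY T dy n p q m) = 0 := by
  simp only [DY, DZ, LinearMap.comp_apply]
  rw [dy_castT, dz_castT, castT_castT, castT_castT, castT_add_castT, hyz, map_zero]

theorem DZ_exact
    (hz : ∀ x y z (m : T x y (z + 1)), dz x y (z + 1) m = 0 → ∃ m' : T x y z, dz x y z m' = m)
    (n p q : ℤ) (m : T p q (n + 1 - p - q)) (h : DZ T dz (n + 1) p q m = 0) :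
    ∃ m' : T p q (n - p - q), DZ T dz n p q m' = m := by
  have h0 : dz p q (n + 1 - p - q) m = 0 := by
    simp only [DZ, LinearMap.comp_apply, castT_eq_zero] at h
    exact h
  have hm : dz p q (n - p - q + 1)
      (castT (R := R) T rfl rfl (by omega : n + 1 - p - q = n - p - q + 1) m) = 0 := by
    rw [dz_castT, h0, map_zero]
  obtain ⟨m', hm'⟩ := hz p q (n - p - q) _ hm
  refine ⟨m', ?_⟩
  simp only [DZ, LinearMap.comp_apply]
  rw [hm', castT_castT, castT_self]


noncomputable def bAux
    (hz : ∀ x y z (m : T x y (z + 1)), dz x y (z + 1) m = 0 → ∃ m' : T x y z, dz x y z m' = m)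
    (n k : ℤ) (a : ∀ p q : ℤ, T p q (n + 1 - p - q)) (p q : ℤ) : T p q (n - p - q) :=
  if hk : p < k ∨ q < k then 0
  else
    @dite _
      (DZ T dz (n + 1) p q
        (a p q - DX T dx n p q (bAux hz n k a (p - 1) q)
          - DY T dy n p q (bAux hz n k a p (q - 1))) = 0)
      (Classical.dec _)
      (fun h => (DZ_exact T dz hz n p q _ h).choose)
      (fun _ => 0)
termination_by (p + q - 2 * k + 1).toNat
decreasing_by
  · omega
  · omega


theorem bAux_zero
    (hz : ∀ x y z (m : T x y (z + 1)), dz x y (z + 1) m = 0 → ∃ m' : T x y z, dz x y z m' = m)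
    (n k : ℤ) (a : ∀ p q : ℤ, T p q (n + 1 - p - q)) (p q : ℤ) (h : p < k ∨ q < k) :
    bAux T dx dy dz hz n k a p q = 0 := by
  rw [bAux, dif_pos h]

theorem bAux_spec
    (hxx : ∀ x y z (m : T x y z), dx (x + 1) y z (dx x y z m) = 0)
    (hyy : ∀ x y z (m : T x y z), dy x (y + 1) z (dy x y z m) = 0)
    (hxy : ∀ x y z (m : T x y z), dx x (y + 1) z (dy x y z m) + dy (x + 1) y z (dx x y z m) = 0)
    (hxz : ∀ x y z (m : T x y z), dx x y (z + 1) (dz x y z m) + dz (x + 1) y z (dx x y z m) = 0)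
    (hyz : ∀ x y z (m : T x y z), dy x y (z + 1) (dz x y z m) + dz x (y + 1) z (dy x y z m) = 0)
    (hz : ∀ x y z (m : T x y (z + 1)), dz x y (z + 1) m = 0 → ∃ m' : T x y z, dz x y z m' = m)
    (n k : ℤ) (a : ∀ p q : ℤ, T p q (n + 1 - p - q))
    (ha : ∀ p q : ℤ, p < k ∨ q < k → a p q = 0)
    (hda : ∀ p q : ℤ, DX T dx (n + 1) p q (a (p - 1) q) + DY T dy (n + 1) p q (a p (q - 1))
      + DZ T dz (n + 1) p q (a p q) = 0) :
    ∀ p q : ℤ, DZ T dz n p q (bAux T dx dy dz hz n k a p q)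
      = a p q - DX T dx n p q (bAux T dx dy dz hz n k a (p - 1) q)
        - DY T dy n p q (bAux T dx dy dz hz n k a p (q - 1)) := by
  have key : ∀ m : ℕ, ∀ p q : ℤ, (p + q - 2 * k + 1).toNat ≤ m →
      DZ T dz n p q (bAux T dx dy dz hz n k a p q)
        = a p q - DX T dx n p q (bAux T dx dy dz hz n k a (p - 1) q)
          - DY T dy n p q (bAux T dx dy dz hz n k a p (q - 1)) := by
    intro m
    induction m with
    | zero =>
      intro p q hm
      have hk : p < k ∨ q < k := by omega
      rw [bAux_zero T dx dy dz hz n k a p q hk,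
        bAux_zero T dx dy dz hz n k a (p - 1) q (by omega),
        bAux_zero T dx dy dz hz n k a p (q - 1) (by omega),
        ha p q hk]
      simp
    | succ m ih =>
      intro p q hm
      by_cases hk : p < k ∨ q < k
      · rw [bAux_zero T dx dy dz hz n k a p q hk,
          bAux_zero T dx dy dz hz n k a (p - 1) q (by omega),
          bAux_zero T dx dy dz hz n k a p (q - 1) (by omega),
          ha p q hk]
        simp
      · -- main case
        have h1 := ih (p - 1) q (by omega)
        have h2 := ih p (q - 1) (by omega)
        have hc : DZ T dz (n + 1) p q
            (a p q - DX T dx n p q (bAux T dx dy dz hz n k a (p - 1) q)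
              - DY T dy n p q (bAux T dx dy dz hz n k a p (q - 1))) = 0 := by
          have e1 : DZ T dz (n + 1) p q
                (DX T dx n p q (bAux T dx dy dz hz n k a (p - 1) q))
              = -(DX T dx (n + 1) p q (DZ T dz n (p - 1) q
                  (bAux T dx dy dz hz n k a (p - 1) q))) :=
            eq_neg_of_add_eq_zero_right
              (DXZ T dx dz hxz n p q (bAux T dx dy dz hz n k a (p - 1) q))
          have e2 : DZ T dz (n + 1) p q
                (DY T dy n p q (bAux T dx dy dz hz n k a p (q - 1)))
              = -(DY T dy (n + 1) p q (DZ T dz n p (q - 1)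
                  (bAux T dx dy dz hz n k a p (q - 1)))) :=
            eq_neg_of_add_eq_zero_right
              (DYZ T dy dz hyz n p q (bAux T dx dy dz hz n k a p (q - 1)))
          rw [h1] at e1
          rw [h2] at e2
          simp only [map_sub] at e1 e2
          rw [DXX T dx hxx n p q] at e1
          rw [DYY T dy hyy n p q] at e2
          have e3 : DY T dy (n + 1) p q
                (DX T dx n p (q - 1) (bAux T dx dy dz hz n k a (p - 1) (q - 1)))
              = -(DX T dx (n + 1) p q (DY T dy n (p - 1) q
                  (bAux T dx dy dz hz n k a (p - 1) (q - 1)))) :=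
            eq_neg_of_add_eq_zero_right
              (DXY T dx dy hxy n p q (bAux T dx dy dz hz n k a (p - 1) (q - 1)))
          have e4 : DZ T dz (n + 1) p q (a p q)
              = -(DX T dx (n + 1) p q (a (p - 1) q) + DY T dy (n + 1) p q (a p (q - 1))) :=
            eq_neg_of_add_eq_zero_right (hda p q)
          rw [map_sub, map_sub, e1, e2, e3, e4]
          abel
        rw [bAux, dif_neg hk, dif_pos hc]
        exact (DZ_exact T dz hz n p q _ hc).choose_spec
  exact fun p q => key _ p q le_rfl

end BltAux

open BltAux in
/-- Let `T` be a triple complex of `R`-modules (three anticommuting differentials squaring to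
zero) which is exact in the `z`-direction.  Then its below-and-left truncated totalisation —
whose `n`-th term consists of those elements of `∀ p q, T p q (n - p - q)` vanishing as soon
as `p` or `q` is small enough — is acyclic. -/
theorem bltTot_acyclic_of_exact_z (R : Type) [Ring R]
    (T : ℤ → ℤ → ℤ → Type)
    [∀ x y z, AddCommGroup (T x y z)] [∀ x y z, Module R (T x y z)]
    (dx : ∀ x y z, T x y z →ₗ[R] T (x + 1) y z)
    (dy : ∀ x y z, T x y z →ₗ[R] T x (y + 1) z)
    (dz : ∀ x y z, T x y z →ₗ[R] T x y (z + 1))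
    (hxx : ∀ x y z (m : T x y z), dx (x + 1) y z (dx x y z m) = 0)
    (hyy : ∀ x y z (m : T x y z), dy x (y + 1) z (dy x y z m) = 0)
    (hzz : ∀ x y z (m : T x y z), dz x y (z + 1) (dz x y z m) = 0)
    (hxy : ∀ x y z (m : T x y z), dx x (y + 1) z (dy x y z m) + dy (x + 1) y z (dx x y z m) = 0)
    (hxz : ∀ x y z (m : T x y z), dx x y (z + 1) (dz x y z m) + dz (x + 1) y z (dx x y z m) = 0)
    (hyz : ∀ x y z (m : T x y z), dy x y (z + 1) (dz x y z m) + dz x (y + 1) z (dy x y z m) = 0)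
    -- exactness in the `z`-direction:
    (hz : ∀ x y z (m : T x y (z + 1)), dz x y (z + 1) m = 0 → ∃ m' : T x y z, dz x y z m' = m) :
    ∀ (n : ℤ) (a : ∀ p q, T p q (n + 1 - p - q)),
      (∃ k : ℤ, ∀ p q : ℤ, p < k ∨ q < k → a p q = 0) →
      tot3d T dx dy dz (n + 1) a = 0 →
      ∃ b : ∀ p q, T p q (n - p - q),
        (∃ k : ℤ, ∀ p q : ℤ, p < k ∨ q < k → b p q = 0) ∧ tot3d T dx dy dz n b = a := by
  intro n a hsupp hcycle
  obtain ⟨k, ha⟩ := hsupp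
  have hda : ∀ p q : ℤ, DX T dx (n + 1) p q (a (p - 1) q) + DY T dy (n + 1) p q (a p (q - 1))
      + DZ T dz (n + 1) p q (a p q) = 0 := by
    intro p q
    have := congrFun (congrFun hcycle p) q
    rwa [tot3d_apply] at this
  refine ⟨bAux T dx dy dz hz n k a, ⟨k, fun p q h => bAux_zero T dx dy dz hz n k a p q h⟩, ?_⟩
  funext p q
  rw [tot3d_apply, bAux_spec T dx dy dz hxx hyy hxy hxz hyz hz n k a ha hda p q]
  abel
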